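/- Let A, B, T be nonzero integers with gcd(A,B)=1 and T squarefree, and let p be an odd prime dividing both (A²+T²B²)² and 4AB(A²−T²B²). Then p divides A and p divides T, and ord_p of gcd((A²+T²B²)², 4AB(A²−T²B²)) is at most 4. -/

import Mathlib

theorem stmt_9 (A B T : ℤ) (hA : A ≠ 0) (hB : B ≠ 0) (hT : T ≠ 0)
    (hAB : IsCoprime A B) (hsq : Squarefree T)
    (p : ℕ) (hp : p.Prime) (hpodd : p ≠ 2)
    (hpdvd : (p : ℤ) ∣ ((A ^ 2 + T ^ 2 * B ^ 2) ^ 2).gcd (4 * A * B * (A ^ 2 - T ^ 2 * B ^ 2))) :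
    (p : ℤ) ∣ A ∧ (p : ℤ) ∣ T ∧
      (((A ^ 2 + T ^ 2 * B ^ 2) ^ 2).gcd (4 * A * B * (A ^ 2 - T ^ 2 * B ^ 2))).factorization p ≤ 4 := by
  set X : ℤ := A ^ 2 + T ^ 2 * B ^ 2 with hXdef
  set Y : ℤ := A ^ 2 - T ^ 2 * B ^ 2 with hYdef
  have hPp : Prime (p : ℤ) := Nat.prime_iff_prime_int.mp hp
  have hX0 : X ≠ 0 := by positivity
  have hp2 : ¬ (p : ℤ) ∣ 2 := by
    intro h
    exact hpodd ((Nat.prime_dvd_prime_iff_eq hp Nat.prime_two).mp (by exact_mod_cast h))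
  have hp4 : ¬ (p : ℤ) ∣ 4 := by
    intro h
    exact hp2 (hPp.dvd_of_dvd_pow (show (p:ℤ) ∣ 2 ^ 2 by norm_num; exact h))
  have hdX2 : (p : ℤ) ∣ X ^ 2 := hpdvd.trans (Int.gcd_dvd_left _ _)
  have hdprod : (p : ℤ) ∣ 4 * A * B * Y := hpdvd.trans (Int.gcd_dvd_right _ _)
  have hdX : (p : ℤ) ∣ X := hPp.dvd_of_dvd_pow hdX2
  -- p ∣ A
  have hpA : (p : ℤ) ∣ A := by
    by_contra hA'
    have hpB : ¬ (p : ℤ) ∣ B := by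
      intro h
      have h1 : (p : ℤ) ∣ T ^ 2 * B ^ 2 := Dvd.dvd.mul_left (h.pow (n := 2) two_ne_zero) _
      have h2 : (p : ℤ) ∣ A ^ 2 := by
        have : A ^ 2 = X - T ^ 2 * B ^ 2 := by rw [hXdef]; ring
        rw [this]; exact dvd_sub hdX h1
      exact hA' (hPp.dvd_of_dvd_pow h2)
    have hpY : (p : ℤ) ∣ Y := by
      rcases hPp.dvd_mul.mp hdprod with h | h
      · rcases hPp.dvd_mul.mp h with h' | h'
        · rcases hPp.dvd_mul.mp h' with h'' | h''
          · exact absurd h'' hp4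
          · exact absurd h'' hA'
        · exact absurd h' hpB
      · exact h
    have h2A : (p : ℤ) ∣ 2 * A ^ 2 := by
      have : 2 * A ^ 2 = X + Y := by rw [hXdef, hYdef]; ring
      rw [this]; exact dvd_add hdX hpY
    rcases hPp.dvd_mul.mp h2A with h | h
    · exact hp2 h
    · exact hA' (hPp.dvd_of_dvd_pow h)
  have hpB : ¬ (p : ℤ) ∣ B := by
    intro h
    exact hPp.not_unit (hAB.isUnit_of_dvd' hpA h)
  have hdTB : (p : ℤ) ∣ T ^ 2 * B ^ 2 := by
    have : T ^ 2 * B ^ 2 = X - A ^ 2 := by rw [hXdef]; ring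
    rw [this]
    exact dvd_sub hdX (hpA.pow two_ne_zero)
  have hpT : (p : ℤ) ∣ T := by
    rcases hPp.dvd_mul.mp hdTB with h | h
    · exact hPp.dvd_of_dvd_pow h
    · exact absurd (hPp.dvd_of_dvd_pow h) hpB
  have hT2 : ¬ (p : ℤ) ^ 2 ∣ T := by
    intro h
    exact hPp.not_unit (hsq (p : ℤ) (by rwa [← sq]))
  refine ⟨hpA, hpT, ?_⟩
  -- key fact: p^3 does not divide T^2 * B^2
  have C : ¬ (p : ℤ) ^ 3 ∣ T ^ 2 * B ^ 2 := by
    intro h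
    have cop : IsCoprime ((p : ℤ) ^ 3) (B ^ 2) :=
      ((hPp.coprime_iff_not_dvd.mpr hpB).pow : IsCoprime ((p:ℤ)^3) (B^2))
    have h' : (p : ℤ) ^ 3 ∣ T ^ 2 := cop.dvd_of_dvd_mul_right h
    obtain ⟨T', hT'⟩ := hpT
    have h'' : (p : ℤ) ^ 2 * p ∣ (p : ℤ) ^ 2 * T' ^ 2 := by
      have e1 : (p : ℤ) ^ 3 = (p : ℤ) ^ 2 * p := by ring
      have e2 : T ^ 2 = (p : ℤ) ^ 2 * T' ^ 2 := by rw [hT']; ring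
      rw [← e1, ← e2]; exact h'
    have hpT' : (p : ℤ) ∣ T' ^ 2 :=
      (mul_dvd_mul_iff_left (pow_ne_zero 2 hPp.ne_zero)).mp h''
    have : (p : ℤ) ^ 2 ∣ T := by
      obtain ⟨u, hu⟩ := hPp.dvd_of_dvd_pow hpT'
      exact ⟨u, by rw [hT', hu]; ring⟩
    exact hT2 this
  -- key counting lemma
  have keysq : ∀ x : ℤ, x ≠ 0 → ¬ (p : ℤ) ^ 3 ∣ x → ¬ (p : ℤ) ^ 5 ∣ x ^ 2 := by
    intro x hx h3 h5
    have hxn : x.natAbs ≠ 0 := Int.natAbs_ne_zero.mpr hx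
    have h3' : ¬ p ^ 3 ∣ x.natAbs := by
      intro h; exact h3 (by rwa [← Int.natCast_dvd, Nat.cast_pow] at h)
    have h5' : p ^ 5 ∣ (x ^ 2).natAbs := by
      rw [← Int.natCast_dvd]
      push_cast
      exact h5
    rw [Int.natAbs_pow] at h5'
    have f3 : x.natAbs.factorization p ≤ 2 := by
      by_contra hcon
      exact h3' ((Nat.Prime.pow_dvd_iff_le_factorization hp hxn).mpr (by omega))
    have f5 : 5 ≤ (x.natAbs ^ 2).factorization p :=
      (Nat.Prime.pow_dvd_iff_le_factorization hp (pow_ne_zero 2 hxn)).mp h5'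
    rw [Nat.factorization_pow] at f5
    simp only [Finsupp.smul_apply, smul_eq_mul] at f5
    omega
  -- reduce the goal to ¬ p^5 ∣ gcd
  have hg0 : Int.gcd (X ^ 2) (4 * A * B * Y) ≠ 0 := by
    rw [Ne, Int.gcd_eq_zero_iff]
    intro ⟨h1, _⟩
    exact pow_ne_zero 2 hX0 h1
  by_contra hcon
  push_neg at hcon
  have h5g : p ^ 5 ∣ Int.gcd (X ^ 2) (4 * A * B * Y) :=
    (Nat.Prime.pow_dvd_iff_le_factorization hp hg0).mpr (by omega)
  have h5g' : ((p : ℤ)) ^ 5 ∣ (Int.gcd (X ^ 2) (4 * A * B * Y) : ℤ) := by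
    exact_mod_cast Int.natCast_dvd_natCast.mpr h5g
  have h5X : (p : ℤ) ^ 5 ∣ X ^ 2 := h5g'.trans (Int.gcd_dvd_left _ _)
  have h5P : (p : ℤ) ^ 5 ∣ 4 * A * B * Y := h5g'.trans (Int.gcd_dvd_right _ _)
  by_cases hA2 : (p : ℤ) ^ 2 ∣ A
  · -- p^4 ∣ A^2, so p^3 ∤ X
    have h3X : ¬ (p : ℤ) ^ 3 ∣ X := by
      intro h
      apply C
      have e : T ^ 2 * B ^ 2 = X - A ^ 2 := by rw [hXdef]; ring
      rw [e]
      refine dvd_sub h ?_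
      calc (p : ℤ) ^ 3 ∣ (p : ℤ) ^ 4 := pow_dvd_pow _ (by norm_num)
        _ = ((p : ℤ) ^ 2) ^ 2 := by ring
        _ ∣ A ^ 2 := pow_dvd_pow_of_dvd hA2 2
    exact keysq X hX0 h3X h5X
  · by_cases h3X : (p : ℤ) ^ 3 ∣ X
    · -- then p^3 ∤ Y, contradiction with h5P
      have h3Y : ¬ (p : ℤ) ^ 3 ∣ Y := by
        intro h
        apply C
        have h2 : (p : ℤ) ^ 3 ∣ 2 * (T ^ 2 * B ^ 2) := by
          have e : 2 * (T ^ 2 * B ^ 2) = X - Y := by rw [hXdef, hYdef]; ring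
          rw [e]; exact dvd_sub h3X h
        exact ((hPp.coprime_iff_not_dvd.mpr hp2).symm.pow_right (n := 3)).symm.dvd_of_dvd_mul_left h2
      have cop4B : IsCoprime ((p : ℤ) ^ 5) (4 * B) := by
        have c4 : IsCoprime ((p : ℤ)) (4 * B) :=
          hPp.coprime_iff_not_dvd.mpr (fun h => by
            rcases hPp.dvd_mul.mp h with h' | h'
            · exact hp4 h'
            · exact hpB h')
        exact c4.pow_left
      have h5AY : (p : ℤ) ^ 5 ∣ A * Y := by
        apply cop4B.dvd_of_dvd_mul_left
        rw [show 4 * B * (A * Y) = 4 * A * B * Y by ring]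
        exact h5P
      obtain ⟨A', hA'⟩ := hpA
      have hpA' : ¬ (p : ℤ) ∣ A' := by
        intro h
        obtain ⟨u, hu⟩ := h
        exact hA2 ⟨u, by rw [hA', hu]; ring⟩
      have h4AY : (p : ℤ) ^ 4 ∣ A' * Y := by
        have : (p : ℤ) * (p : ℤ) ^ 4 ∣ (p : ℤ) * (A' * Y) := by
          rw [show (p:ℤ) * ((p:ℤ))^4 = (p:ℤ)^5 by ring,
            show (p:ℤ) * (A' * Y) = A * Y by rw [hA']; ring]
          exact h5AY
        exact (mul_dvd_mul_iff_left hPp.ne_zero).mp this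
      have h4Y : (p : ℤ) ^ 4 ∣ Y :=
        ((hPp.coprime_iff_not_dvd.mpr hpA').pow_left).dvd_of_dvd_mul_left h4AY
      exact h3Y ((pow_dvd_pow _ (by norm_num)).trans h4Y)
    · exact keysq X hX0 h3X h5X
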